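/- Let G be a finite simple graph and v ∈ V(G). If v ∉ N(diadem(G)), then d(G) ≥ d(G − v). -/

import Mathlib

namespace AlmostBipartite

variable {V : Type*}

/-- The (open) neighborhood `N(X)` of a set of vertices: all vertices having a neighbor in `X`. -/
def nbhd (G : SimpleGraph V) (X : Set V) : Set V := {v | ∃ x ∈ X, G.Adj v x}

/-- The closed neighborhood `N[X] = X ∪ N(X)`. -/
def closedNbhd (G : SimpleGraph V) (X : Set V) : Set V := X ∪ nbhd G X

/-- A set of vertices is independent: no two of its vertices are adjacent. -/
def IsIndepSet (G : SimpleGraph V) (S : Set V) : Prop :=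
  ∀ ⦃a⦄, a ∈ S → ∀ ⦃b⦄, b ∈ S → ¬G.Adj a b

/-- The difference `d(X) = |X| - |N(X)|`. -/
noncomputable def diffOf (G : SimpleGraph V) (X : Set V) : ℤ :=
  (X.ncard : ℤ) - ((nbhd G X).ncard : ℤ)

/-- The critical difference `d(G)`: maximum of `d(I)` over independent sets `I`. -/
noncomputable def critDiff (G : SimpleGraph V) : ℤ :=
  sSup (diffOf G '' {S | IsIndepSet G S})

/-- A critical independent set: an independent set `A` with `d(A) = d(G)`. -/
def IsCritIndep (G : SimpleGraph V) (A : Set V) : Prop :=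
  IsIndepSet G A ∧ diffOf G A = critDiff G

/-- `diadem G` is the union of all critical independent sets of `G`. -/
def diadem (G : SimpleGraph V) : Set V := ⋃₀ {A | IsCritIndep G A}

/-- A maximum critical independent set: a critical independent set of maximum cardinality. -/
def IsMaxCritIndep (G : SimpleGraph V) (A : Set V) : Prop :=
  IsCritIndep G A ∧ ∀ B : Set V, IsCritIndep G B → B.ncard ≤ A.ncard

/-- `nucleus G` is the intersection of all maximum critical independent sets of `G`. -/
def nucleus (G : SimpleGraph V) : Set V := ⋂₀ {A | IsMaxCritIndep G A}

/-- The independence number `α(G)`. -/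
noncomputable def indepNum (G : SimpleGraph V) : ℕ :=
  sSup {n | ∃ S : Set V, IsIndepSet G S ∧ S.ncard = n}

/-- The critical independence number `α'(G)`: cardinality of a maximum critical independent set. -/
noncomputable def critIndepNum (G : SimpleGraph V) : ℕ :=
  sSup {n | ∃ S : Set V, IsCritIndep G S ∧ S.ncard = n}

/-- A maximum independent set. -/
def IsMaxIndep (G : SimpleGraph V) (S : Set V) : Prop :=
  IsIndepSet G S ∧ S.ncard = indepNum G

/-- `corona G` is the union of all maximum independent sets of `G`. -/
def corona (G : SimpleGraph V) : Set V := ⋃₀ {S | IsMaxIndep G S}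

/-- `core G` is the intersection of all maximum independent sets of `G`. -/
def core (G : SimpleGraph V) : Set V := ⋂₀ {S | IsMaxIndep G S}

/-- The matching number `μ(G)`: maximum size of a matching in `G`. -/
noncomputable def matchNum (G : SimpleGraph V) : ℕ :=
  sSup {n | ∃ M : SimpleGraph.Subgraph G, M.IsMatching ∧ M.edgeSet.ncard = n}

/-- `G` is a König-Egerváry graph if `α(G) + μ(G) = n(G)`. -/
def KonigEgervary (G : SimpleGraph V) : Prop :=
  indepNum G + matchNum G = Nat.card V

/-- A closed walk which is an odd cycle. -/
def IsOddCycleWalk (G : SimpleGraph V) {u : V} (c : G.Walk u u) : Prop :=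
  c.IsCycle ∧ Odd c.length

/-- `c` is the unique odd cycle of `G`: it is an odd cycle, and every odd cycle of `G`
has the same edge set as `c`.  A graph admitting such `c` is almost bipartite. -/
def IsUniqueOddCycle (G : SimpleGraph V) {u : V} (c : G.Walk u u) : Prop :=
  IsOddCycleWalk G c ∧
    ∀ (w : V) (c' : G.Walk w w), IsOddCycleWalk G c' →
      {e | e ∈ c'.edges} = {e | e ∈ c.edges}

/-- The vertex-deleted subgraph `G - v`. -/
def deleteVert (G : SimpleGraph V) (v : V) := G.induce {w | w ≠ v}

/-- `ϱ_v(G)`: the number of vertices `v` such that `G - v` is a König-Egerváry graph. -/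
noncomputable def rhoV (G : SimpleGraph V) : ℕ :=
  {v : V | KonigEgervary (deleteVert G v)}.ncard

end AlmostBipartite

open AlmostBipartite

section Aux
variable {W : Type*} [Finite W]

lemma aux_le_critDiff (H : SimpleGraph W) {A : Set W} (hA : IsIndepSet H A) :
    diffOf H A ≤ critDiff H := by
  have hfin : (diffOf H '' {S | IsIndepSet H S}).Finite :=
    (Set.toFinite _).image _
  exact le_csSup hfin.bddAbove (Set.mem_image_of_mem _ hA)

lemma aux_exists_crit (H : SimpleGraph W) :
    ∃ A : Set W, IsCritIndep H A := by
  have hfin : (diffOf H '' {S | IsIndepSet H S}).Finite :=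
    (Set.toFinite _).image _
  have hne : (diffOf H '' {S | IsIndepSet H S}).Nonempty := by
    refine ⟨diffOf H ∅, Set.mem_image_of_mem _ ?_⟩
    intro a ha; exact absurd ha (Set.notMem_empty a)
  obtain ⟨A, hA, hAd⟩ := hne.csSup_mem hfin
  exact ⟨A, hA, hAd⟩

end Aux


/-- If `v ∉ N(diadem G)`, then `d(G) ≥ d(G - v)`. -/
theorem stmt11 {V : Type*} [Fintype V] (G : SimpleGraph V) (v : V)
    (hv : v ∉ nbhd G (diadem G)) :
    critDiff G ≥ critDiff (deleteVert G v) := by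
  classical
  have : Finite ({w | w ≠ v} : Set V) := Subtype.finite
  obtain ⟨A, ⟨hAind, hAd⟩⟩ := aux_exists_crit (deleteVert G v)
  set A' : Set V := Subtype.val '' A with hA'
  have hA'ind : IsIndepSet G A' := by
    rintro a ⟨x, hx, rfl⟩ b ⟨y, hy, rfl⟩ hadj
    exact hAind hx hy hadj
  have hNimg : Subtype.val '' (nbhd (deleteVert G v) A) = nbhd G A' \ {v} := by
    ext w
    constructor
    · rintro ⟨⟨w, hw⟩, ⟨x, hx, hadj⟩, rfl⟩
      exact ⟨⟨x.val, ⟨x, hx, rfl⟩, hadj⟩, hw⟩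
    · rintro ⟨⟨x', ⟨x, hx, rfl⟩, hadj⟩, hw⟩
      exact ⟨⟨w, hw⟩, ⟨x, hx, hadj⟩, rfl⟩
  have hcardA : A.ncard = A'.ncard :=
    (Set.ncard_image_of_injective A Subtype.val_injective).symm
  have hcardN : (nbhd (deleteVert G v) A).ncard = (nbhd G A' \ {v}).ncard := by
    rw [← hNimg, Set.ncard_image_of_injective _ Subtype.val_injective]
  have key : diffOf (deleteVert G v) A ≤ critDiff G := by
    by_cases hvN : v ∈ nbhd G A'
    · -- N(A') \ {v} has one fewer element
      have hNfin : (nbhd G A').Finite := Set.toFinite _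
      have hpos : 1 ≤ (nbhd G A').ncard := by
        rw [Nat.one_le_iff_ne_zero]
        intro h0
        have := (Set.ncard_eq_zero hNfin).mp h0
        rw [this] at hvN; exact hvN
      have hdiff : (nbhd G A' \ {v}).ncard = (nbhd G A').ncard - 1 :=
        Set.ncard_diff_singleton_of_mem hvN
      have hlt : diffOf G A' < critDiff G := by
        rcases lt_or_eq_of_le (aux_le_critDiff G hA'ind) with h | h
        · exact h
        · exfalso
          apply hv
          obtain ⟨x, hxA, hadj⟩ := hvN
          exact ⟨x, ⟨A', ⟨hA'ind, h⟩, hxA⟩, hadj⟩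
      have : diffOf (deleteVert G v) A = diffOf G A' + 1 := by
        unfold diffOf
        rw [hcardA, hcardN, hdiff]
        push_cast [hpos]
        ring
      omega
    · have hNeq : nbhd G A' \ {v} = nbhd G A' := by
        rw [Set.diff_singleton_eq_self hvN]
      have : diffOf (deleteVert G v) A = diffOf G A' := by
        unfold diffOf
        rw [hcardA, hcardN, hNeq]
      rw [this]
      exact aux_le_critDiff G hA'ind
  rw [← hAd]
  exact key
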